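/- arXiv:2108.03879 — 3 statements merged into one kernel-verified Lean document; each statement's English description precedes it below -/
import Mathlib

section
/- Let f, g be nonnegative functions in L²(Ω, ν) with ν a probability measure, and c₁, c₂ > 0. Define cSSIM(f,g) := M(f,g)·S(f,g), with M(f,g) = (2μ_f μ_g + c₁)/(μ_f² + μ_g² + c₁) and S(f,g) = (2σ_fg + c₂)/(σ_ff + σ_gg + c₂). Then |1 − cSSIM(f,g)| ≤ c_{fg} ‖f − g‖²_{L²(ν)}, where c_{fg} = 4/(σ_ff + σ_gg + c₂) + 1/(μ_f² + μ_g² + c₁). -/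
set_option maxHeartbeats 1000000
open MeasureTheory

noncomputable def mu {α : Type*} [MeasurableSpace α] (ν : Measure α) (f : α → ℝ) : ℝ :=
  ∫ x, f x ∂ν

noncomputable def cov {α : Type*} [MeasurableSpace α] (ν : Measure α) (f g : α → ℝ) : ℝ :=
  ∫ x, (f x - mu ν f) * (g x - mu ν g) ∂ν

noncomputable def Mlum {α : Type*} [MeasurableSpace α] (ν : Measure α) (f g : α → ℝ)
    (c1 : ℝ) : ℝ :=
  (2 * mu ν f * mu ν g + c1) / ((mu ν f) ^ 2 + (mu ν g) ^ 2 + c1)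

noncomputable def Sstr {α : Type*} [MeasurableSpace α] (ν : Measure α) (f g : α → ℝ)
    (c2 : ℝ) : ℝ :=
  (2 * cov ν f g + c2) / (cov ν f f + cov ν g g + c2)

noncomputable def cSSIM {α : Type*} [MeasurableSpace α] (ν : Measure α) (f g : α → ℝ)
    (c1 c2 : ℝ) : ℝ :=
  Mlum ν f g c1 * Sstr ν f g c2

theorem stmt_6 {α : Type*} [MeasurableSpace α] (ν : Measure α) [IsProbabilityMeasure ν]
    (f g : α → ℝ) (hf : MemLp f 2 ν) (hg : MemLp g 2 ν)
    (hf0 : 0 ≤ᵐ[ν] f) (hg0 : 0 ≤ᵐ[ν] g) (c1 c2 : ℝ) (hc1 : 0 < c1) (hc2 : 0 < c2) :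
    |1 - cSSIM ν f g c1 c2| ≤
      (4 / (cov ν f f + cov ν g g + c2) + 1 / ((mu ν f) ^ 2 + (mu ν g) ^ 2 + c1)) *
        ∫ x, (f x - g x) ^ 2 ∂ν := by
  have hfi : Integrable f ν := hf.integrable one_le_two
  have hgi : Integrable g ν := hg.integrable one_le_two
  have hf2 : Integrable (fun x => f x ^ 2) ν := hf.integrable_sq
  have hg2 : Integrable (fun x => g x ^ 2) ν := hg.integrable_sq
  have hfg : Integrable (fun x => f x * g x) ν := by
    refine Integrable.mono' ((hf2.add hg2).div_const 2)
      (hf.aestronglyMeasurable.mul hg.aestronglyMeasurable) ?_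
    filter_upwards with x
    simp only [Pi.add_apply, Pi.div_apply, Real.norm_eq_abs, abs_mul]
    nlinarith [sq_nonneg (|f x| - |g x|), sq_abs (f x), sq_abs (g x), abs_nonneg (f x), abs_nonneg (g x)]
  -- key covariance expansion
  have key : ∀ p q : α → ℝ, Integrable p ν → Integrable q ν →
      Integrable (fun x => p x * q x) ν →
      cov ν p q = (∫ x, p x * q x ∂ν) - (mu ν p) * (mu ν q) := by
    intro p q hp hq hpq
    have h1 : Integrable (fun x => mu ν p * q x) ν := hq.const_mul _
    have h2 : Integrable (fun x => mu ν q * p x) ν := hp.const_mul _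
    have e : cov ν p q =
        ∫ x, ((p x * q x - mu ν p * q x) - (mu ν q * p x - mu ν p * mu ν q)) ∂ν := by
      unfold cov; congr 1; funext x; ring
    have i1 : Integrable (fun x => p x * q x - mu ν p * q x) ν := hpq.sub h1
    have i2 : Integrable (fun x => mu ν q * p x - mu ν p * mu ν q) ν :=
      h2.sub (integrable_const _)
    rw [e, integral_sub i1 i2, integral_sub hpq h1,
      integral_sub h2 (integrable_const _),
      integral_const_mul, integral_const_mul, integral_const]
    simp [mu]
    ring
  set a := mu ν f with ha
  set b := mu ν g with hb
  set P := ∫ x, f x ^ 2 ∂ν with hP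
  set Q := ∫ x, g x ^ 2 ∂ν with hQ
  set R := ∫ x, f x * g x ∂ν with hR
  set I := ∫ x, (f x - g x) ^ 2 ∂ν with hIdef
  have sqmul : ∀ h : α → ℝ, (fun x => h x * h x) = fun x => h x ^ 2 := by
    intro h; funext x; ring
  have covff : cov ν f f = P - a ^ 2 := by
    rw [key f f hfi hfi (by rw [sqmul f]; exact hf2), sqmul f]; ring
  have covgg : cov ν g g = Q - b ^ 2 := by
    rw [key g g hgi hgi (by rw [sqmul g]; exact hg2), sqmul g]; ring
  have covfg : cov ν f g = R - a * b := key f g hfi hgi hfg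
  have hI : I = P + Q - 2 * R := by
    have e : (fun x => (f x - g x) ^ 2) = fun x => (f x ^ 2 + g x ^ 2) - 2 * (f x * g x) := by
      funext x; ring
    have i1 : Integrable (fun x => f x ^ 2 + g x ^ 2) ν := hf2.add hg2
    have i2 : Integrable (fun x => 2 * (f x * g x)) ν := hfg.const_mul 2
    rw [hIdef, e, integral_sub i1 i2, integral_add hf2 hg2, integral_const_mul]
  -- variance of f - g
  have hsub2 : Integrable (fun x => (f x - g x) * (f x - g x)) ν := by
    rw [sqmul]; exact (hf.sub hg).integrable_sq
  have muh : mu ν (fun x => f x - g x) = a - b := by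
    simp only [mu, ha, hb]; exact integral_sub hfi hgi
  have covh : cov ν (fun x => f x - g x) (fun x => f x - g x) = I - (a - b) ^ 2 := by
    rw [key (fun x => f x - g x) (fun x => f x - g x) (hfi.sub hgi) (hfi.sub hgi) hsub2,
      muh, sqmul, ← hIdef]; ring
  have hVnn : 0 ≤ I - (a - b) ^ 2 := by
    rw [← covh]; exact integral_nonneg fun x => mul_self_nonneg _
  have hcovff : 0 ≤ cov ν f f := integral_nonneg fun x => mul_self_nonneg _
  have hcovgg : 0 ≤ cov ν g g := integral_nonneg fun x => mul_self_nonneg _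
  have ha0 : 0 ≤ a := integral_nonneg_of_ae hf0
  have hb0 : 0 ≤ b := integral_nonneg_of_ae hg0
  have hI0 : 0 ≤ I := integral_nonneg fun x => sq_nonneg _
  clear_value a b P Q R I
  set A := a ^ 2 + b ^ 2 + c1 with hAdef
  set B := cov ν f f + cov ν g g + c2 with hBdef
  have hA : 0 < A := by positivity
  have hB : 0 < B := by
    have : 0 < cov ν f f + cov ν g g + c2 := by linarith
    simpa [hBdef] using this
  set M := (2 * a * b + c1) / A with hMdef
  set S := (2 * cov ν f g + c2) / B with hSdef
  have hcs : cSSIM ν f g c1 c2 = M * S := by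
    simp [cSSIM, Mlum, Sstr, hMdef, hSdef, hAdef, hBdef, ha, hb]
  have hM0 : 0 ≤ M := div_nonneg (by nlinarith) hA.le
  have hM1 : M ≤ 1 := (div_le_one hA).mpr (by nlinarith [sq_nonneg (a - b)])
  have hVB : cov ν f f + cov ν g g - 2 * cov ν f g = I - (a - b) ^ 2 := by
    rw [covff, covgg, covfg, hI]; ring
  have hS1 : S ≤ 1 := (div_le_one hB).mpr (by simp only [hBdef]; linarith [hVnn, hVB])
  have h1M : 1 - M = (a - b) ^ 2 / A := by
    rw [hMdef, hAdef]; field_simp; ring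
  have h1S : 1 - S = (I - (a - b) ^ 2) / B := by
    rw [hSdef, ← hVB]; field_simp; ring
  have h1 : 1 - M ≤ I / A := by
    rw [h1M]; exact (div_le_div_iff_of_pos_right hA).mpr (by linarith)
  have h2' : 1 - S ≤ I / B := by
    rw [h1S]; exact (div_le_div_iff_of_pos_right hB).mpr (by nlinarith [sq_nonneg (a - b)])
  have h3 : M * (1 - S) ≤ 1 - S := by
    nlinarith [mul_nonneg (sub_nonneg.mpr hM1) (sub_nonneg.mpr hS1)]
  have hnn : 0 ≤ 1 - M * S := by
    have := mul_nonneg hM0 (sub_nonneg.mpr hS1); nlinarith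
  rw [hcs, abs_of_nonneg hnn]
  have hfin : I / A + I / B ≤ (4 / B + 1 / A) * I := by
    have h3I : 0 ≤ 3 * (I / B) := by positivity
    have he : (4 / B + 1 / A) * I - (I / A + I / B) = 3 * (I / B) := by
      field_simp; ring
    linarith
  calc 1 - M * S = (1 - M) + M * (1 - S) := by ring
    _ ≤ I / A + (1 - S) := by linarith
    _ ≤ I / A + I / B := by linarith
    _ ≤ (4 / B + 1 / A) * I := hfin
end

section
/- Under the hypotheses of the cSSIM upper bound, |1 − cSSIM(f,g)| ≤ c ‖f − g‖²_{L²(ν)}, where c = (4c₁ + c₂)/(c₁ c₂), i.e. c = 4/c₂ + 1/c₁. -/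
open MeasureTheory

private lemma integrable_mul_of_memL2 {α : Type*} [MeasurableSpace α] {ν : Measure α}
    {f g : α → ℝ} (hf : MemLp f 2 ν) (hg : MemLp g 2 ν) :
    Integrable (fun x => f x * g x) ν := by
  have h : MemLp (f • g) 1 ν := hg.smul hf (hpqr := ⟨by
    rw [ENNReal.inv_two_add_inv_two]
    norm_num⟩)
  have := memLp_one_iff_integrable.mp h
  exact this

set_option maxHeartbeats 1000000 in
theorem stmt_7 {α : Type*} [MeasurableSpace α] (ν : Measure α) [IsProbabilityMeasure ν]
    (f g : α → ℝ) (hf : MemLp f 2 ν) (hg : MemLp g 2 ν)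
    (hf0 : 0 ≤ᵐ[ν] f) (hg0 : 0 ≤ᵐ[ν] g) (c1 c2 : ℝ) (hc1 : 0 < c1) (hc2 : 0 < c2) :
    |1 - cSSIM ν f g c1 c2| ≤ (4 / c2 + 1 / c1) * ∫ x, (f x - g x) ^ 2 ∂ν := by
  have one_le_two' : (1 : ENNReal) ≤ 2 := one_le_two
  have hfi : Integrable f ν := hf.integrable one_le_two'
  have hgi : Integrable g ν := hg.integrable one_le_two'
  set a := mu ν f with ha_def
  set b := mu ν g with hb_def
  set s := cov ν f f with hs_def
  set t := cov ν g g with ht_def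
  set u := cov ν f g with hu_def
  set I := ∫ x, (f x - g x) ^ 2 ∂ν with hI_def
  have ha : 0 ≤ a := integral_nonneg_of_ae hf0
  have hb : 0 ≤ b := integral_nonneg_of_ae hg0
  have hs : 0 ≤ s := integral_nonneg fun x => mul_self_nonneg _
  have ht : 0 ≤ t := integral_nonneg fun x => mul_self_nonneg _
  have hI : 0 ≤ I := integral_nonneg fun x => sq_nonneg _
  -- centered functions
  have hfc : MemLp (fun x => f x - a) 2 ν := hf.sub (memLp_const a)
  have hgc : MemLp (fun x => g x - b) 2 ν := hg.sub (memLp_const b)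
  have hF2 : Integrable (fun x => (f x - a) * (f x - a)) ν := integrable_mul_of_memL2 hfc hfc
  have hG2 : Integrable (fun x => (g x - b) * (g x - b)) ν := integrable_mul_of_memL2 hgc hgc
  have hFG : Integrable (fun x => (f x - a) * (g x - b)) ν := integrable_mul_of_memL2 hfc hgc
  -- h := f - g
  have hhm : ∫ x, (f x - g x) ∂ν = a - b := integral_sub hfi hgi
  have hh2 : Integrable (fun x => (f x - g x) ^ 2) ν := (hf.sub hg).integrable_sq
  have hhi : Integrable (fun x => f x - g x) ν := hfi.sub hgi
  set m := a - b with hm_def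
  set V := ∫ x, ((f x - g x) - m) ^ 2 ∂ν with hV_def
  have hVnn : 0 ≤ V := integral_nonneg fun x => sq_nonneg _
  -- Claim 1: V = I - m^2
  have claim1 : V = I - m ^ 2 := by
    have hpt : ∀ x, ((f x - g x) - m) ^ 2
        = (f x - g x) ^ 2 - (2 * m) * (f x - g x) + m ^ 2 := fun x => by ring
    have i0 : Integrable (fun x => (2 * m) * (f x - g x)) ν := hhi.const_mul (2 * m)
    have i1 : Integrable (fun x => (f x - g x) ^ 2 - (2 * m) * (f x - g x)) ν := hh2.sub i0
    rw [hV_def]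
    simp_rw [hpt]
    rw [integral_add i1 (integrable_const _), integral_sub hh2 i0, integral_const_mul, hhm]
    simp only [integral_const, Measure.real, measure_univ, ENNReal.toReal_one, one_smul, smul_eq_mul]
    ring
  -- Claim 2: V = s + t - 2*u
  have claim2 : V = s + t - 2 * u := by
    have hpt : ∀ x, ((f x - g x) - m) ^ 2
        = (f x - a) * (f x - a) + (g x - b) * (g x - b)
          - 2 * ((f x - a) * (g x - b)) := fun x => by
      rw [hm_def]; ring
    have i0 : Integrable (fun x => 2 * ((f x - a) * (g x - b))) ν := hFG.const_mul 2
    have i1 : Integrable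
        (fun x => (f x - a) * (f x - a) + (g x - b) * (g x - b)) ν := hF2.add hG2
    rw [hV_def]
    simp_rw [hpt]
    rw [integral_sub i1 i0, integral_add hF2 hG2, integral_const_mul]
    rfl
  have hm2I : m ^ 2 ≤ I := by nlinarith [hVnn, claim1]
  have hVI : V ≤ I := by nlinarith [sq_nonneg m, claim1]
  -- positivity of denominators
  have hD1 : (0:ℝ) < a ^ 2 + b ^ 2 + c1 := by positivity
  have hD2 : (0:ℝ) < s + t + c2 := by
    have : 0 ≤ s + t := add_nonneg hs ht
    linarith
  set M := Mlum ν f g c1 with hM_def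
  set S := Sstr ν f g c2 with hS_def
  have hM_eq : M = (2 * a * b + c1) / (a ^ 2 + b ^ 2 + c1) := rfl
  have hS_eq : S = (2 * u + c2) / (s + t + c2) := rfl
  have hMpos : 0 < M := by
    rw [hM_eq]
    apply div_pos _ hD1
    nlinarith
  have hMle1 : M ≤ 1 := by
    rw [hM_eq, div_le_one hD1]
    nlinarith [sq_nonneg (a - b)]
  have h1M : 1 - M = (a - b) ^ 2 / (a ^ 2 + b ^ 2 + c1) := by
    rw [hM_eq]
    field_simp
    ring
  have h1S : 1 - S = V / (s + t + c2) := by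
    rw [hS_eq, claim2]
    field_simp
    ring
  have h1Snn : 0 ≤ 1 - S := by
    rw [h1S]; exact div_nonneg hVnn hD2.le
  have h1Mnn : 0 ≤ 1 - M := by linarith
  have hkey : 1 - M * S = (1 - M) + M * (1 - S) := by ring
  have habs : |1 - cSSIM ν f g c1 c2| = (1 - M) + M * (1 - S) := by
    have hc : cSSIM ν f g c1 c2 = M * S := rfl
    rw [hc, hkey]
    exact abs_of_nonneg (add_nonneg h1Mnn (mul_nonneg hMpos.le h1Snn))
  rw [habs]
  have hb1 : 1 - M ≤ I / c1 := by
    rw [h1M]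
    have h1 : (a - b) ^ 2 / (a ^ 2 + b ^ 2 + c1) ≤ (a - b) ^ 2 / c1 :=
      div_le_div_of_nonneg_left (sq_nonneg _) hc1 (by nlinarith)
    have h2 : (a - b) ^ 2 / c1 ≤ I / c1 := div_le_div_of_nonneg_right hm2I hc1.le
    linarith
  have hb2 : M * (1 - S) ≤ I / c2 := by
    have h0 : M * (1 - S) ≤ 1 - S := by nlinarith
    have h1 : 1 - S ≤ V / c2 := by
      rw [h1S]
      exact div_le_div_of_nonneg_left hVnn hc2 (by linarith)
    have h2 : V / c2 ≤ I / c2 := div_le_div_of_nonneg_right hVI hc2.le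
    linarith
  have hfinal : I / c1 + I / c2 ≤ (4 / c2 + 1 / c1) * I := by
    have h4 : I / c2 ≤ 4 * (I / c2) := by nlinarith [div_nonneg hI hc2.le]
    have heq : (4 / c2 + 1 / c1) * I = 4 * (I / c2) + I / c1 := by
      field_simp
    linarith
  linarith
end

section
/- Let f, g be nonnegative in L²(Ω, ν) with ν a probability measure, ‖f‖_{L²}, ‖g‖_{L²} ≤ R, and suppose μ_f = μ_g. Then (1/(4R² + c₂))·‖f − g‖²_{L²(ν)} ≤ |1 − cSSIM(f,g)|; combined with the upper bound, 1 − cSSIM is equivalent to the squared L² distance in this case. -/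
open MeasureTheory

lemma my_int_mul {α : Type*} [MeasurableSpace α] {ν : Measure α} [IsFiniteMeasure ν]
    {f g : α → ℝ} (hf : MemLp f 2 ν) (hg : MemLp g 2 ν) :
    Integrable (fun x => f x * g x) ν := by
  have h : MemLp (f • g) 1 ν := hg.smul hf
  exact h.integrable le_rfl

theorem stmt_11 {α : Type*} [MeasurableSpace α] (ν : Measure α) [IsProbabilityMeasure ν]
    (f g : α → ℝ) (hf : MemLp f 2 ν) (hg : MemLp g 2 ν)
    (hf0 : 0 ≤ᵐ[ν] f) (hg0 : 0 ≤ᵐ[ν] g) (c1 c2 R : ℝ)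
    (hc1 : 0 < c1) (hc2 : 0 < c2) (hR : 0 < R)
    (hfR : Real.sqrt (∫ x, (f x) ^ 2 ∂ν) ≤ R)
    (hgR : Real.sqrt (∫ x, (g x) ^ 2 ∂ν) ≤ R)
    (hmean : mu ν f = mu ν g) :
    (1 / (4 * R ^ 2 + c2)) * (∫ x, (f x - g x) ^ 2 ∂ν) ≤ |1 - cSSIM ν f g c1 c2| := by
  set m := mu ν f with hm
  have hFm : MemLp (fun x => f x - m) 2 ν := hf.sub (memLp_const m)
  have hGm : MemLp (fun x => g x - m) 2 ν := hg.sub (memLp_const m)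
  have hFF : Integrable (fun x => (f x - m) * (f x - m)) ν := my_int_mul hFm hFm
  have hGG : Integrable (fun x => (g x - m) * (g x - m)) ν := my_int_mul hGm hGm
  have hFG : Integrable (fun x => (f x - m) * (g x - m)) ν := my_int_mul hFm hGm
  have hf2 : Integrable (fun x => f x ^ 2) ν := by
    simpa [pow_two] using my_int_mul hf hf
  have hg2 : Integrable (fun x => g x ^ 2) ν := by
    simpa [pow_two] using my_int_mul hg hg
  have hfi : Integrable f ν := hf.integrable one_le_two
  have hgi : Integrable g ν := hg.integrable one_le_two
  have hcovff : cov ν f f = ∫ x, (f x - m) * (f x - m) ∂ν := by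
    simp only [cov, ← hm]
  have hcovgg : cov ν g g = ∫ x, (g x - m) * (g x - m) ∂ν := by
    simp only [cov, ← hmean, ← hm]
  have hcovfg : cov ν f g = ∫ x, (f x - m) * (g x - m) ∂ν := by
    simp only [cov, ← hmean, ← hm]
  set N := ∫ x, (f x - g x) ^ 2 ∂ν with hN
  have hNnn : 0 ≤ N := integral_nonneg fun x => sq_nonneg _
  have hkey : N = cov ν f f + cov ν g g - 2 * cov ν f g := by
    rw [hcovff, hcovgg, hcovfg, hN]
    have h1 : ∀ x, (f x - g x) ^ 2 =
        ((f x - m) * (f x - m) + (g x - m) * (g x - m)) - 2 * ((f x - m) * (g x - m)) :=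
      fun x => by ring
    simp_rw [h1]
    have hFFGG : Integrable (fun x => (f x - m) * (f x - m) + (g x - m) * (g x - m)) ν :=
      hFF.add hGG
    have h2FG : Integrable (fun x => 2 * ((f x - m) * (g x - m))) ν := hFG.const_mul 2
    rw [integral_sub hFFGG h2FG, integral_add hFF hGG, integral_const_mul]
  have hcovffnn : 0 ≤ cov ν f f := by
    rw [hcovff]; exact integral_nonneg fun x => mul_self_nonneg _
  have hcovggnn : 0 ≤ cov ν g g := by
    rw [hcovgg]; exact integral_nonneg fun x => mul_self_nonneg _
  have hintf2 : (∫ x, (f x) ^ 2 ∂ν) ≤ R ^ 2 := by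
    have h0 : 0 ≤ ∫ x, (f x) ^ 2 ∂ν := integral_nonneg fun x => sq_nonneg _
    calc (∫ x, (f x) ^ 2 ∂ν) = (Real.sqrt (∫ x, (f x) ^ 2 ∂ν)) ^ 2 := (Real.sq_sqrt h0).symm
    _ ≤ R ^ 2 := pow_le_pow_left₀ (Real.sqrt_nonneg _) hfR 2
  have hintg2 : (∫ x, (g x) ^ 2 ∂ν) ≤ R ^ 2 := by
    have h0 : 0 ≤ ∫ x, (g x) ^ 2 ∂ν := integral_nonneg fun x => sq_nonneg _
    calc (∫ x, (g x) ^ 2 ∂ν) = (Real.sqrt (∫ x, (g x) ^ 2 ∂ν)) ^ 2 := (Real.sq_sqrt h0).symm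
    _ ≤ R ^ 2 := pow_le_pow_left₀ (Real.sqrt_nonneg _) hgR 2
  have hvarf : cov ν f f ≤ R ^ 2 := by
    have heq : cov ν f f = (∫ x, (f x) ^ 2 ∂ν) - m ^ 2 := by
      rw [hcovff]
      have h1 : ∀ x, (f x - m) * (f x - m) = (f x ^ 2 - 2 * m * f x) + m ^ 2 :=
        fun x => by ring
      simp_rw [h1]
      have hA : Integrable (fun x => f x ^ 2 - 2 * m * f x) ν := hf2.sub (hfi.const_mul (2 * m))
      have hB : Integrable (fun x => 2 * m * f x) ν := hfi.const_mul (2 * m)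
      rw [integral_add hA (integrable_const _), integral_sub hf2 hB,
        integral_const_mul, integral_const]
      have : ∫ x, f x ∂ν = m := rfl
      rw [this]
      simp
      ring
    rw [heq]
    nlinarith [sq_nonneg m]
  have hvarg : cov ν g g ≤ R ^ 2 := by
    have heq : cov ν g g = (∫ x, (g x) ^ 2 ∂ν) - m ^ 2 := by
      rw [hcovgg]
      have h1 : ∀ x, (g x - m) * (g x - m) = (g x ^ 2 - 2 * m * g x) + m ^ 2 :=
        fun x => by ring
      simp_rw [h1]
      have hA : Integrable (fun x => g x ^ 2 - 2 * m * g x) ν := hg2.sub (hgi.const_mul (2 * m))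
      have hB : Integrable (fun x => 2 * m * g x) ν := hgi.const_mul (2 * m)
      rw [integral_add hA (integrable_const _), integral_sub hg2 hB,
        integral_const_mul, integral_const]
      have : ∫ x, g x ∂ν = m := hmean.symm
      rw [this]
      simp
      ring
    rw [heq]
    nlinarith [sq_nonneg m]
  set D := cov ν f f + cov ν g g + c2 with hD
  have hDpos : 0 < D := by positivity
  have hDle : D ≤ 4 * R ^ 2 + c2 := by nlinarith
  have hMlum : Mlum ν f g c1 = 1 := by
    unfold Mlum
    rw [← hmean, ← hm]
    rw [show 2 * m * m + c1 = m ^ 2 + m ^ 2 + c1 by ring]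
    exact div_self (by positivity)
  have hS : 1 - cSSIM ν f g c1 c2 = N / D := by
    unfold cSSIM Sstr
    rw [hMlum, one_mul, ← hD]
    field_simp
    linarith [hkey]
  rw [hS, abs_of_nonneg (div_nonneg hNnn hDpos.le), one_div, mul_comm, ← div_eq_mul_inv]
  gcongr
end
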